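/- Let I ⊆ ℝ be an open interval and U ⊆ ℝⁿ an open set. Let f : I × U → ℝⁿ be continuous and locally Lipschitz in the state variable, and let ψ : I × U → ℝᵐ be continuously differentiable. Suppose ψ is a conserved quantity of ẋ = f(t, x), i.e. t ↦ ψ(t, x(t)) is constant along every solution curve. Then Λ(t, x) := ∂ₓψ(t, x) is a conservation law multiplier associated with ψ: for every continuously differentiable curve x : I → U (not necessarily a solution), Λ(t, x(t)) · (ẋ(t) − f(t, x(t))) = d/dt [ψ(t, x(t))] for all t ∈ I. -/

import Mathlib

open Set Metric

/-- If `ψ` is a conserved quantity of `ẋ = f(t,x)` (constant along every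
solution curve), with `f` continuous and locally Lipschitz in the state and `ψ` of class C¹,
then `Λ(t,x) := ∂ₓψ(t,x)` is a conservation law multiplier associated with `ψ`: along every
C¹ curve `x : I → U` (not necessarily a solution),
`Λ(t,x(t)) ⬝ (ẋ(t) - f(t,x(t))) = d/dt ψ(t,x(t))`. -/
theorem jacobian_is_conservation_law_multiplier {n m : ℕ}
    (I : Set ℝ) (hIopen : IsOpen I) (hIinterval : I.OrdConnected)
    (U : Set (Fin n → ℝ)) (hUopen : IsOpen U)
    (f : ℝ → (Fin n → ℝ) → (Fin n → ℝ))
    (hf_cont : ContinuousOn (fun p : ℝ × (Fin n → ℝ) => f p.1 p.2) (I ×ˢ U))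
    (hf_lip : ∀ t ∈ I, ∀ x ∈ U, ∃ ε > (0 : ℝ), ∃ K : NNReal,
      ∀ s ∈ Metric.ball t ε ∩ I, LipschitzOnWith K (f s) (Metric.ball x ε ∩ U))
    (ψ : ℝ → (Fin n → ℝ) → (Fin m → ℝ))
    (hψ : ContDiffOn ℝ 1 (fun p : ℝ × (Fin n → ℝ) => ψ p.1 p.2) (I ×ˢ U))
    (hconserved : ∀ J : Set ℝ, IsOpen J → J.OrdConnected → J ⊆ I →
      ∀ x : ℝ → (Fin n → ℝ), Set.MapsTo x J U →
      (∀ t ∈ J, HasDerivAt x (f t (x t)) t) →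
      ∀ s ∈ J, ∀ t ∈ J, ψ s (x s) = ψ t (x t))
    (Λ : ℝ → (Fin n → ℝ) → Matrix (Fin m) (Fin n) ℝ)
    (hΛ : ∀ t x, Λ t x = LinearMap.toMatrix'
        (fderiv ℝ (fun v => ψ t v) x : (Fin n → ℝ) →ₗ[ℝ] (Fin m → ℝ))) :
    ∀ x : ℝ → (Fin n → ℝ), ContDiffOn ℝ 1 x I → Set.MapsTo x I U →
      ∀ t ∈ I, (Λ t (x t)).mulVec (deriv x t - f t (x t))
        = deriv (fun s => ψ s (x s)) t := by
  intro x hx hmaps t₀ ht₀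
  have hx₀ : x t₀ ∈ U := hmaps ht₀
  -- ### Part 1: total derivative of ψ and the Jacobian
  have hIU : IsOpen (I ×ˢ U) := hIopen.prod hUopen
  have hmem : (t₀, x t₀) ∈ I ×ˢ U := ⟨ht₀, hx₀⟩
  have hψdiff : DifferentiableAt ℝ (fun p : ℝ × (Fin n → ℝ) => ψ p.1 p.2) (t₀, x t₀) :=
    (hψ.differentiableOn one_ne_zero).differentiableAt (hIU.mem_nhds hmem)
  set D := fderiv ℝ (fun p : ℝ × (Fin n → ℝ) => ψ p.1 p.2) (t₀, x t₀) with hDdef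
  have hD : HasFDerivAt (fun p : ℝ × (Fin n → ℝ) => ψ p.1 p.2) D (t₀, x t₀) :=
    hψdiff.hasFDerivAt
  have hinr : HasFDerivAt (fun y : Fin n → ℝ => ((t₀ : ℝ), y))
      (ContinuousLinearMap.inr ℝ ℝ ((Fin n → ℝ))) (x t₀) := by
    exact (hasFDerivAt_const t₀ (x t₀)).prodMk (hasFDerivAt_id (x t₀))
  have hpart : HasFDerivAt (fun y => ψ t₀ y)
      (D.comp (ContinuousLinearMap.inr ℝ ℝ ((Fin n → ℝ)))) (x t₀) := hD.comp (x t₀) hinr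
  have hΛeq : ∀ w, (Λ t₀ (x t₀)).mulVec w = D (0, w) := by
    intro w
    rw [hΛ, hpart.fderiv, ← Matrix.toLin'_apply, Matrix.toLin'_toMatrix']
    simp
  -- ### Part 2: local solution through (t₀, x t₀) via Picard–Lindelöf
  obtain ⟨ε, hε, K, hK⟩ := hf_lip t₀ ht₀ (x t₀) hx₀
  obtain ⟨r₁, hr₁, hr₁sub⟩ := Metric.nhds_basis_closedBall.mem_iff.mp
    ((hIopen.inter isOpen_ball).mem_nhds ⟨ht₀, mem_ball_self hε⟩)
  obtain ⟨r₂, hr₂, hr₂sub⟩ := Metric.nhds_basis_closedBall.mem_iff.mp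
    ((hUopen.inter isOpen_ball).mem_nhds ⟨hx₀, mem_ball_self hε⟩)
  have hcpt : IsCompact ((closedBall t₀ r₁) ×ˢ (closedBall (x t₀) r₂)) :=
    (isCompact_closedBall _ _).prod (isCompact_closedBall _ _)
  have hsub : (closedBall t₀ r₁) ×ˢ (closedBall (x t₀) r₂) ⊆ I ×ˢ U :=
    Set.prod_mono (fun a ha => (hr₁sub ha).1) (fun a ha => (hr₂sub ha).1)
  obtain ⟨C, hC⟩ := hcpt.exists_bound_of_continuousOn (hf_cont.mono hsub)
  set C' : ℝ := max C 0 with hC'def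
  have hC'0 : 0 ≤ C' := le_max_right _ _
  set δ : ℝ := min r₁ (r₂ / (C' + 1)) with hδdef
  have hδ : 0 < δ := lt_min hr₁ (div_pos hr₂ (by linarith))
  have hδr₁ : δ ≤ r₁ := min_le_left _ _
  have hIccI : Set.Icc (t₀ - δ) (t₀ + δ) ⊆ I := by
    intro s hs
    have : s ∈ closedBall t₀ r₁ := by
      rw [Real.closedBall_eq_Icc]
      exact ⟨by linarith [hs.1], by linarith [hs.2]⟩
    exact (hr₁sub this).1
  have hpl : IsPicardLindelof f (tmin := t₀ - δ) (tmax := t₀ + δ)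
      ⟨t₀, by constructor <;> linarith⟩ (x t₀) ⟨r₂, hr₂.le⟩ 0 ⟨C', hC'0⟩ K := by
    refine ⟨?_, ?_, ?_, ?_⟩
    · intro t ht
      have htI : t ∈ Metric.ball t₀ ε ∩ I := by
        have : t ∈ closedBall t₀ r₁ := by
          rw [Real.closedBall_eq_Icc]; exact ⟨by linarith [ht.1], by linarith [ht.2]⟩
        exact ⟨(hr₁sub this).2, (hr₁sub this).1⟩
      exact (hK t htI).mono (fun y hy => ⟨(hr₂sub hy).2, (hr₂sub hy).1⟩)
    · intro y hy
      have hyU : y ∈ U := (hr₂sub hy).1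
      exact hf_cont.comp ((continuous_id.prodMk continuous_const).continuousOn)
        (fun s hs => ⟨hIccI hs, hyU⟩)
    · intro t ht y hy
      refine hC (t, y) ⟨?_, hy⟩ |>.trans (le_max_left _ _)
      rw [Real.closedBall_eq_Icc]
      exact ⟨by linarith [ht.1, hδr₁], by linarith [ht.2, hδr₁]⟩
    · show C' * max (t₀ + δ - t₀) (t₀ - (t₀ - δ)) ≤ r₂ - 0
      rw [sub_zero]
      have : max (t₀ + δ - t₀) (t₀ - (t₀ - δ)) = δ := by
        rw [add_sub_cancel_left, sub_sub_cancel, max_self]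
      rw [this]
      calc C' * δ ≤ C' * (r₂ / (C' + 1)) := by
            apply mul_le_mul_of_nonneg_left (min_le_right _ _) hC'0
        _ ≤ r₂ := by
            rw [mul_div_assoc']
            rw [div_le_iff₀ (by linarith)]
            nlinarith
  obtain ⟨γ, hγ0, hγ⟩ := hpl.exists_eq_forall_mem_Icc_hasDerivWithinAt₀
  replace hγ0 : γ t₀ = x t₀ := hγ0
  have ht₀mem : t₀ ∈ Set.Icc (t₀ - δ) (t₀ + δ) := ⟨by linarith, by linarith⟩
  have hγcont : ContinuousAt γ t₀ :=
    (hγ t₀ ht₀mem).continuousWithinAt.continuousAt (Icc_mem_nhds (by linarith) (by linarith))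
  have hUnhds : γ ⁻¹' U ∈ nhds t₀ := hγcont.preimage_mem_nhds (hUopen.mem_nhds (hγ0 ▸ hx₀))
  obtain ⟨η₀, hη₀, hη₀sub⟩ := Metric.mem_nhds_iff.mp hUnhds
  set η := min η₀ δ with hηdef
  have hη : 0 < η := lt_min hη₀ hδ
  set J := Set.Ioo (t₀ - η) (t₀ + η) with hJdef
  have hJI : J ⊆ I := fun s hs =>
    hIccI ⟨by linarith [hs.1, min_le_right η₀ δ], by linarith [hs.2, min_le_right η₀ δ]⟩
  have hγmaps : Set.MapsTo γ J U := by
    intro s hs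
    apply hη₀sub
    rw [mem_ball, Real.dist_eq, abs_lt]
    constructor <;> [linarith [hs.1, min_le_left η₀ δ]; linarith [hs.2, min_le_left η₀ δ]]
  have hγderiv : ∀ t ∈ J, HasDerivAt γ (f t (γ t)) t := by
    intro t ht
    have h1 : t ∈ Set.Ioo (t₀ - δ) (t₀ + δ) :=
      ⟨by linarith [ht.1, min_le_right η₀ δ], by linarith [ht.2, min_le_right η₀ δ]⟩
    exact (hγ t (Set.mem_Icc_of_Ioo h1)).hasDerivAt (Icc_mem_nhds h1.1 h1.2)
  have ht₀J : t₀ ∈ J := ⟨by linarith, by linarith⟩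
  -- ### Part 3: conservation ⇒ D (1, f t₀ (x t₀)) = 0
  have hconst := hconserved J isOpen_Ioo Set.ordConnected_Ioo hJI γ hγmaps hγderiv
  have heq : (fun s => ψ s (γ s)) =ᶠ[nhds t₀] fun _ => ψ t₀ (γ t₀) :=
    Filter.eventually_of_mem (isOpen_Ioo.mem_nhds ht₀J)
      (fun s hs => hconst s hs t₀ ht₀J)
  have hDγ : HasFDerivAt (fun p : ℝ × (Fin n → ℝ) => ψ p.1 p.2) D (t₀, γ t₀) := by
    rw [hγ0]; exact hD
  have hcurveγ : HasDerivAt (fun s => ((s : ℝ), γ s)) ((1 : ℝ), f t₀ (γ t₀)) t₀ :=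
    (hasDerivAt_id t₀).prodMk (hγderiv t₀ ht₀J)
  have hgd : HasDerivAt (fun s => ψ s (γ s)) (D (1, f t₀ (γ t₀))) t₀ :=
    hDγ.comp_hasDerivAt (l := fun p : ℝ × (Fin n → ℝ) => ψ p.1 p.2) t₀ hcurveγ
  have hconstd : HasDerivAt (fun s => ψ s (γ s)) 0 t₀ :=
    (hasDerivAt_const t₀ (ψ t₀ (γ t₀))).congr_of_eventuallyEq heq
  have hzero : D (1, f t₀ (x t₀)) = 0 := by
    have := hgd.unique hconstd
    rwa [hγ0] at this
  -- ### Part 4: chain rule along the given curve and conclusion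
  have hxdiff : DifferentiableAt ℝ x t₀ :=
    (hx.differentiableOn one_ne_zero).differentiableAt (hIopen.mem_nhds ht₀)
  have hcurve : HasDerivAt (fun s => ((s : ℝ), x s)) ((1 : ℝ), deriv x t₀) t₀ :=
    (hasDerivAt_id t₀).prodMk hxdiff.hasDerivAt
  have hψc : HasDerivAt (fun s => ψ s (x s)) (D (1, deriv x t₀)) t₀ :=
    hD.comp_hasDerivAt (l := fun p : ℝ × (Fin n → ℝ) => ψ p.1 p.2) t₀ hcurve
  rw [hψc.deriv, hΛeq]
  have hsplit : ((1 : ℝ), deriv x t₀)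
      = ((1 : ℝ), f t₀ (x t₀)) + ((0 : ℝ), deriv x t₀ - f t₀ (x t₀)) := by
    simp [Prod.ext_iff]
  rw [hsplit, map_add, hzero, zero_add]
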